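/- Let k ≥ 3 be an integer and let n₁ ≥ n₂ ≥ ⋯ ≥ n_k be positive integers. There exists an orientation D of the complete k-partite graph K_{n₁,n₂,…,n_k} whose (1,2)-step competition graph is complete if and only if one of the following holds: (a) k = 3 and either (n₂ ≥ 3 and n₃ = 1) or n₃ ≥ 2; (b) k = 4 and either (n₁ ≥ 3 and n₂ = 1) or n₂ ≥ 2; (c) k ≥ 5. -/

import Mathlib

set_option maxRecDepth 1000000
set_option maxHeartbeats 4000000


/-- Adjacency in the (1,2)-step competition graph `C_{1,2}(D)` of the (simple) digraph `D`
with arc relation `A`: there is a vertex `w` distinct from `u` and `v` such that either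
(`d_{D-v}(u,w) ≤ 1` and `d_{D-u}(v,w) ≤ 2`) or (`d_{D-u}(v,w) ≤ 1` and `d_{D-v}(u,w) ≤ 2`). -/
def CompAdj {V : Type*} (A : V → V → Prop) (u v : V) : Prop :=
  u ≠ v ∧ ∃ w, w ≠ u ∧ w ≠ v ∧
    ((A u w ∧ (A v w ∨ ∃ z, z ≠ u ∧ A v z ∧ A z w)) ∨
     (A v w ∧ (A u w ∨ ∃ z, z ≠ v ∧ A u z ∧ A z w)))

/-- The (1,2)-step competition graph `C_{1,2}(D)` of the digraph with arc relation `A`. -/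
def compGraph {V : Type*} (A : V → V → Prop) : SimpleGraph V where
  Adj := CompAdj A
  symm := by
    constructor
    rintro u v ⟨hne, w, h1, h2, h3⟩
    exact ⟨hne.symm, w, h2, h1, h3.symm⟩
  loopless := by constructor; rintro u ⟨hne, -⟩; exact hne rfl

/-- Vertices `u` and `v` `(1,2)`-compete in the digraph with arc relation `A`: there is a
vertex `w` distinct from `u` and `v` such that either (`u → w` and there is a directed path
of length 2 from `v` to `w` not traversing `u`) or vice versa. -/
def OneTwoCompete {V : Type*} (A : V → V → Prop) (u v : V) : Prop :=
  ∃ w, w ≠ u ∧ w ≠ v ∧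
    ((A u w ∧ ∃ z, z ≠ u ∧ A v z ∧ A z w) ∨
     (A v w ∧ ∃ z, z ≠ v ∧ A u z ∧ A z w))

/-- `A` is an orientation of the complete multipartite graph whose parts are the fibres of
`p : V → ι`: no arcs within a part, and exactly one arc between any two vertices in
different parts. -/
def IsCompleteMultipartiteOrientation {V ι : Type*} (A : V → V → Prop) (p : V → ι) : Prop :=
  (∀ u v : V, p u = p v → ¬ A u v) ∧
  ∀ u v : V, p u ≠ p v → (A u v ∨ A v u) ∧ ¬ (A u v ∧ A v u)

/-- A multipartite tournament: an orientation of a complete `k`-partite graph with `k ≥ 3`,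
whose partite sets are the (nonempty) fibres of `p : V → ι`. -/
def IsMultipartiteTournament {V ι : Type*} [Fintype ι] (A : V → V → Prop) (p : V → ι) : Prop :=
  Function.Surjective p ∧ 3 ≤ Fintype.card ι ∧ IsCompleteMultipartiteOrientation A p

/-- A multipartite tournament is tight if every partite set is a clique in `C_{1,2}(D)`. -/
def IsTight {V ι : Type*} (A : V → V → Prop) (p : V → ι) : Prop :=
  ∀ u v : V, u ≠ v → p u = p v → CompAdj A u v

/-- A tournament: an orientation of a complete graph. -/
def IsTournament {V : Type*} (A : V → V → Prop) : Prop :=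
  (∀ u, ¬ A u u) ∧ ∀ u v : V, u ≠ v → (A u v ∨ A v u) ∧ ¬ (A u v ∧ A v u)

-- core helper lemmas

lemma compadj_symm {V : Type*} {A : V → V → Prop} {u v : V} (h : CompAdj A u v) :
    CompAdj A v u := by
  obtain ⟨hne, w, h1, h2, h3⟩ := h
  exact ⟨hne.symm, w, h2, h1, h3.symm⟩

/-- K: if u and v compete, u has an out-neighbour different from v. -/
lemma compadj_out {V : Type*} {A : V → V → Prop} {u v : V} (h : CompAdj A u v) :
    ∃ c, c ≠ v ∧ A u c := by
  obtain ⟨hne, w, h1, h2, h3⟩ := h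
  rcases h3 with ⟨huw, -⟩ | ⟨-, huw | ⟨z, hz, huz, -⟩⟩
  · exact ⟨w, h2, huw⟩
  · exact ⟨w, h2, huw⟩
  · exact ⟨z, hz, huz⟩

lemma compadj_congr {V : Type*} {A A' : V → V → Prop} (h : ∀ x y, A x y ↔ A' x y)
    {u v : V} (hc : CompAdj A u v) : CompAdj A' u v := by
  obtain ⟨hne, w, h1, h2, h3⟩ := hc
  refine ⟨hne, w, h1, h2, ?_⟩
  rcases h3 with ⟨h4, h5 | ⟨z, hz1, hz2, hz3⟩⟩ | ⟨h4, h5 | ⟨z, hz1, hz2, hz3⟩⟩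
  · exact Or.inl ⟨(h _ _).1 h4, Or.inl ((h _ _).1 h5)⟩
  · exact Or.inl ⟨(h _ _).1 h4, Or.inr ⟨z, hz1, (h _ _).1 hz2, (h _ _).1 hz3⟩⟩
  · exact Or.inr ⟨(h _ _).1 h4, Or.inl ((h _ _).1 h5)⟩
  · exact Or.inr ⟨(h _ _).1 h4, Or.inr ⟨z, hz1, (h _ _).1 hz2, (h _ _).1 hz3⟩⟩

lemma complete_of (V : Type*) (A : V → V → Prop)
    (h : ∀ u v : V, u ≠ v → CompAdj A u v) : compGraph A = ⊤ := by
  ext u v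
  simp only [SimpleGraph.top_adj]
  exact ⟨fun hc => hc.1, fun hne => h u v hne⟩

lemma of_complete {V : Type*} {A : V → V → Prop} (h : compGraph A = ⊤) :
    ∀ u v : V, u ≠ v → CompAdj A u v := by
  intro u v hne
  have : (compGraph A).Adj u v := by rw [h]; exact hne
  exact this

/-- general blow-up lemma -/
lemma blowup {V ι W ι' : Type*} (p : V → ι) (q : W → ι') (B : W → W → Prop)
    (hB : IsCompleteMultipartiteOrientation B q)
    (hout : ∀ w, ∃ w', B w w')
    (hcomp : ∀ w w', w ≠ w' → CompAdj B w w')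
    (f : V → W) (s : W → V) (hfs : ∀ w, f (s w) = w)
    (hpart : ∀ u v : V, p u = p v ↔ q (f u) = q (f v)) :
    IsCompleteMultipartiteOrientation (fun u v => B (f u) (f v)) p ∧
      compGraph (fun u v => B (f u) (f v)) = ⊤ := by
  constructor
  · constructor
    · intro u v hpv
      exact hB.1 _ _ ((hpart u v).1 hpv)
    · intro u v hpv
      exact hB.2 _ _ (fun hq => hpv ((hpart u v).2 hq))
  · apply complete_of
    intro u v hne
    by_cases hf : f u = f v
    · obtain ⟨w', hw'⟩ := hout (f u)
      have hqne : q (f u) ≠ q w' := fun hq => hB.1 _ _ hq hw'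
      refine ⟨hne, s w', ?_, ?_, Or.inl ⟨?_, Or.inl ?_⟩⟩
      · intro hh; exact hqne (by rw [← hh, hfs])
      · intro hh; exact hqne (by rw [hf, ← hh, hfs])
      · show B (f u) (f (s w')); rw [hfs]; exact hw'
      · show B (f v) (f (s w')); rw [hfs, ← hf]; exact hw'
    · obtain ⟨-, w, h1, h2, h3⟩ := hcomp _ _ hf
      refine ⟨hne, s w, ?_, ?_, ?_⟩
      · intro hh; apply h1; rw [← hh, hfs]
      · intro hh; apply h2; rw [← hh, hfs]
      · rcases h3 with ⟨h4, h5 | ⟨z, hz1, hz2, hz3⟩⟩ | ⟨h4, h5 | ⟨z, hz1, hz2, hz3⟩⟩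
        · exact Or.inl ⟨by show B _ (f (s w)); rw [hfs]; exact h4,
            Or.inl (by show B _ (f (s w)); rw [hfs]; exact h5)⟩
        · refine Or.inl ⟨by show B _ (f (s w)); rw [hfs]; exact h4,
            Or.inr ⟨s z, ?_, ?_, ?_⟩⟩
          · intro hh; apply hz1; rw [← hh, hfs]
          · show B _ (f (s z)); rw [hfs]; exact hz2
          · show B (f (s z)) (f (s w)); rw [hfs, hfs]; exact hz3
        · exact Or.inr ⟨by show B _ (f (s w)); rw [hfs]; exact h4,
            Or.inl (by show B _ (f (s w)); rw [hfs]; exact h5)⟩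
        · refine Or.inr ⟨by show B _ (f (s w)); rw [hfs]; exact h4,
            Or.inr ⟨s z, ?_, ?_, ?_⟩⟩
          · intro hh; apply hz1; rw [← hh, hfs]
          · show B _ (f (s z)); rw [hfs]; exact hz2
          · show B (f (s z)) (f (s w)); rw [hfs, hfs]; exact hz3

instance {V : Type*} [Fintype V] [DecidableEq V] (A : V → V → Prop)
    [∀ u v, Decidable (A u v)] (u v : V) : Decidable (CompAdj A u v) := by
  unfold CompAdj; infer_instance

instance {V ι : Type*} [Fintype V] [DecidableEq ι] (A : V → V → Prop) (p : V → ι)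
    [∀ u v, Decidable (A u v)] : Decidable (IsCompleteMultipartiteOrientation A p) := by
  unfold IsCompleteMultipartiteOrientation; infer_instance

def M222 : Fin 6 → Fin 6 → Bool :=
  ![![false,false,false,false,true,true],
    ![false,false,false,false,true,true],
    ![true,true,false,false,false,false],
    ![true,true,false,false,false,false],
    ![false,false,true,true,false,false],
    ![false,false,true,true,false,false]]

def q222 : Fin 6 → Fin 3 := ![0,0,1,1,2,2]

lemma b222_ori : IsCompleteMultipartiteOrientation (fun i j => M222 i j = true) q222 := by decide
lemma b222_out : ∀ i, ∃ j, M222 i j = true := by decide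
lemma b222_comp : ∀ i j, i ≠ j → CompAdj (fun i j => M222 i j = true) i j := by decide

def M331 : Fin 7 → Fin 7 → Bool :=
  ![![false,false,false,false,false,true,true],
    ![false,false,false,false,true,false,true],
    ![false,false,false,true,false,false,true],
    ![true,true,false,false,false,false,false],
    ![true,false,true,false,false,false,false],
    ![false,true,true,false,false,false,false],
    ![false,false,false,true,true,true,false]]

def q331 : Fin 7 → Fin 3 := ![0,0,0,1,1,1,2]

lemma b331_ori : IsCompleteMultipartiteOrientation (fun i j => M331 i j = true) q331 := by decide
lemma b331_out : ∀ i, ∃ j, M331 i j = true := by decide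
lemma b331_comp : ∀ i j, i ≠ j → CompAdj (fun i j => M331 i j = true) i j := by decide

def M2211 : Fin 6 → Fin 6 → Bool :=
  ![![false,false,false,false,true,true],
    ![false,false,false,false,true,true],
    ![true,true,false,false,false,false],
    ![true,true,false,false,false,false],
    ![false,false,true,true,false,false],
    ![false,false,true,true,true,false]]

def q2211 : Fin 6 → Fin 4 := ![0,0,1,1,2,3]

lemma b2211_ori : IsCompleteMultipartiteOrientation (fun i j => M2211 i j = true) q2211 := by decide
lemma b2211_out : ∀ i, ∃ j, M2211 i j = true := by decide
lemma b2211_comp : ∀ i j, i ≠ j → CompAdj (fun i j => M2211 i j = true) i j := by decide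

def M3111 : Fin 6 → Fin 6 → Bool :=
  ![![false,false,false,false,true,true],
    ![false,false,false,true,false,true],
    ![false,false,false,true,true,false],
    ![true,false,false,false,false,true],
    ![false,true,false,true,false,false],
    ![false,false,true,false,true,false]]

def q3111 : Fin 6 → Fin 4 := ![0,0,0,1,2,3]

lemma b3111_ori : IsCompleteMultipartiteOrientation (fun i j => M3111 i j = true) q3111 := by decide
lemma b3111_out : ∀ i, ∃ j, M3111 i j = true := by decide
lemma b3111_comp : ∀ i j, i ≠ j → CompAdj (fun i j => M3111 i j = true) i j := by decide

/-- rotational tournament (with an extra dominating vertex when `k` is even). -/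
def Cir (k : ℕ) (i j : Fin k) : Prop :=
  (i.val = 2*((k-1)/2)+1 ∧ j.val ≠ 2*((k-1)/2)+1) ∨
  (i.val < 2*((k-1)/2)+1 ∧ j.val < 2*((k-1)/2)+1 ∧
    ((i.val < j.val ∧ j.val - i.val ≤ (k-1)/2) ∨
     (j.val < i.val ∧ (k-1)/2 + 1 ≤ i.val - j.val)))

lemma fne {k : ℕ} {a b : Fin k} (h : a.val ≠ b.val) : a ≠ b :=
  fun hh => h (congrArg Fin.val hh)

lemma cir_ori (k : ℕ) (hk : 5 ≤ k) :
    IsCompleteMultipartiteOrientation (Cir k) (id : Fin k → Fin k) := by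
  constructor
  · intro u v huv hA
    have : u = v := huv
    subst this
    simp only [Cir] at hA
    omega
  · intro u v hne
    have hne' : u.val ≠ v.val := fun h => hne (congrArg id (Fin.ext h))
    have hu := u.isLt
    have hv := v.isLt
    simp only [Cir]
    omega

lemma cir_out (k : ℕ) (hk : 5 ≤ k) : ∀ i : Fin k, ∃ j, Cir k i j := by
  intro i
  have hi := i.isLt
  rcases Nat.lt_or_ge i.val (2*((k-1)/2)+1) with h | h
  · rcases Nat.lt_or_ge (i.val+1) (2*((k-1)/2)+1) with h2 | h2
    · exact ⟨⟨i.val+1, by omega⟩, by simp only [Cir, Fin.val_mk]; omega⟩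
    · exact ⟨⟨0, by omega⟩, by simp only [Cir, Fin.val_mk]; omega⟩
  · exact ⟨⟨0, by omega⟩, by simp only [Cir, Fin.val_mk]; omega⟩

lemma cir_comp (k : ℕ) (hk : 5 ≤ k) : ∀ u v : Fin k, u ≠ v → CompAdj (Cir k) u v := by
  have main : ∀ u v : Fin k, Cir k u v → CompAdj (Cir k) u v := by
    intro u v hA
    have hu := u.isLt
    have hv := v.isLt
    have hne : u ≠ v := by
      apply fne
      simp only [Cir] at hA
      omega
    have hne' : u.val ≠ v.val := fun h => hne (Fin.ext h)
    simp only [Cir] at hA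
    rcases hA with ⟨hun, hvn⟩ | ⟨hul, hvl, harc⟩
    · -- u is the dominating vertex, v in the circulant part
      have hvlt : v.val < 2*((k-1)/2)+1 := by omega
      rcases Nat.lt_or_ge (v.val+1) (2*((k-1)/2)+1) with h2 | h2
      · exact ⟨hne, ⟨v.val+1, by omega⟩, fne (by simp only [Fin.val_mk]; omega),
          fne (by simp only [Fin.val_mk]; omega),
          Or.inl ⟨by simp only [Cir, Fin.val_mk]; omega,
            Or.inl (by simp only [Cir, Fin.val_mk]; omega)⟩⟩
      · exact ⟨hne, ⟨0, by omega⟩, fne (by simp only [Fin.val_mk]; omega),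
          fne (by simp only [Fin.val_mk]; omega),
          Or.inl ⟨by simp only [Cir, Fin.val_mk]; omega,
            Or.inl (by simp only [Cir, Fin.val_mk]; omega)⟩⟩
    · rcases harc with ⟨hab, hd⟩ | ⟨hba, hd⟩
      · -- u.val < v.val, offset d = v.val - u.val ≤ m
        rcases Nat.lt_or_ge (v.val - u.val) ((k-1)/2) with hdm | hdm
        · -- d < m : common prey = successor of v
          rcases Nat.lt_or_ge (v.val+1) (2*((k-1)/2)+1) with h2 | h2
          · exact ⟨hne, ⟨v.val+1, by omega⟩, fne (by simp only [Fin.val_mk]; omega),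
              fne (by simp only [Fin.val_mk]; omega),
              Or.inl ⟨by simp only [Cir, Fin.val_mk]; omega,
                Or.inl (by simp only [Cir, Fin.val_mk]; omega)⟩⟩
          · exact ⟨hne, ⟨0, by omega⟩, fne (by simp only [Fin.val_mk]; omega),
              fne (by simp only [Fin.val_mk]; omega),
              Or.inl ⟨by simp only [Cir, Fin.val_mk]; omega,
                Or.inl (by simp only [Cir, Fin.val_mk]; omega)⟩⟩
        · -- d = m : w = u+1, z = v+2
          rcases Nat.lt_or_ge (v.val+2) (2*((k-1)/2)+1) with h2 | h2
          · exact ⟨hne, ⟨u.val+1, by omega⟩, fne (by simp only [Fin.val_mk]; omega),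
              fne (by simp only [Fin.val_mk]; omega),
              Or.inl ⟨by simp only [Cir, Fin.val_mk]; omega,
                Or.inr ⟨⟨v.val+2, by omega⟩, fne (by simp only [Fin.val_mk]; omega),
                  by simp only [Cir, Fin.val_mk]; omega,
                  by simp only [Cir, Fin.val_mk]; omega⟩⟩⟩
          · exact ⟨hne, ⟨u.val+1, by omega⟩, fne (by simp only [Fin.val_mk]; omega),
              fne (by simp only [Fin.val_mk]; omega),
              Or.inl ⟨by simp only [Cir, Fin.val_mk]; omega,
                Or.inr ⟨⟨v.val+2-(2*((k-1)/2)+1), by omega⟩,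
                  fne (by simp only [Fin.val_mk]; omega),
                  by simp only [Cir, Fin.val_mk]; omega,
                  by simp only [Cir, Fin.val_mk]; omega⟩⟩⟩
      · -- v.val < u.val, wrap-around arc, offset d = 2m+1-(u-v)
        rcases Nat.lt_or_ge ((k-1)/2 + 1) (u.val - v.val) with hdm | hdm
        · -- d < m : common prey = v+1 (no wrap possible)
          exact ⟨hne, ⟨v.val+1, by omega⟩, fne (by simp only [Fin.val_mk]; omega),
            fne (by simp only [Fin.val_mk]; omega),
            Or.inl ⟨by simp only [Cir, Fin.val_mk]; omega,
              Or.inl (by simp only [Cir, Fin.val_mk]; omega)⟩⟩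
        · -- d = m, i.e. u - v = m+1 : w = u+1 (may wrap), z = v+2 (no wrap)
          rcases Nat.lt_or_ge (u.val+1) (2*((k-1)/2)+1) with h2 | h2
          · exact ⟨hne, ⟨u.val+1, by omega⟩, fne (by simp only [Fin.val_mk]; omega),
              fne (by simp only [Fin.val_mk]; omega),
              Or.inl ⟨by simp only [Cir, Fin.val_mk]; omega,
                Or.inr ⟨⟨v.val+2, by omega⟩, fne (by simp only [Fin.val_mk]; omega),
                  by simp only [Cir, Fin.val_mk]; omega,
                  by simp only [Cir, Fin.val_mk]; omega⟩⟩⟩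
          · exact ⟨hne, ⟨0, by omega⟩, fne (by simp only [Fin.val_mk]; omega),
              fne (by simp only [Fin.val_mk]; omega),
              Or.inl ⟨by simp only [Cir, Fin.val_mk]; omega,
                Or.inr ⟨⟨v.val+2, by omega⟩, fne (by simp only [Fin.val_mk]; omega),
                  by simp only [Cir, Fin.val_mk]; omega,
                  by simp only [Cir, Fin.val_mk]; omega⟩⟩⟩
  intro u v hne
  rcases ((cir_ori k hk).2 u v (fun h => hne h)).1 with h | h
  · exact main u v h
  · exact compadj_symm (main v u h)

lemma pos222 (n : Fin 3 → ℕ) (hpos : ∀ i, 0 < n i) (hN : ∀ j : Fin 3, 2 ≤ n j) :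
    ∃ A : (Σ i : Fin 3, Fin (n i)) → (Σ i : Fin 3, Fin (n i)) → Prop,
      IsCompleteMultipartiteOrientation A Sigma.fst ∧ compGraph A = ⊤ := by
  let f : (Σ i : Fin 3, Fin (n i)) → Fin 6 := fun u =>
    ⟨2*u.1.val + min u.2.val 1, by have := u.1.isLt; omega⟩
  let s : Fin 6 → Σ i : Fin 3, Fin (n i) := fun t =>
    ⟨⟨t.val/2, by have := t.isLt; omega⟩,
     ⟨t.val % 2, lt_of_lt_of_le (Nat.mod_lt _ (by omega)) (hN _)⟩⟩
  have hfs : ∀ t, f (s t) = t := by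
    intro t
    apply Fin.ext
    show 2*(t.val/2) + min (t.val % 2) 1 = t.val
    have := t.isLt
    omega
  have hqv : ∀ x : Fin 6, (q222 x).val = x.val / 2 := by decide
  have hq : ∀ u, q222 (f u) = u.1 := by
    intro u
    apply Fin.ext
    rw [hqv]
    show (2*u.1.val + min u.2.val 1) / 2 = u.1.val
    omega
  have hpart : ∀ u v : Σ i : Fin 3, Fin (n i), u.1 = v.1 ↔ q222 (f u) = q222 (f v) := by
    intro u v; rw [hq u, hq v]
  obtain ⟨ho, hc⟩ := blowup Sigma.fst q222 (fun i j => M222 i j = true)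
    b222_ori b222_out b222_comp f s hfs hpart
  exact ⟨_, ho, hc⟩

lemma pos331 (n : Fin 3 → ℕ) (hpos : ∀ i, 0 < n i) (hN : ∀ j : Fin 3, j.val ≤ 1 → 3 ≤ n j) :
    ∃ A : (Σ i : Fin 3, Fin (n i)) → (Σ i : Fin 3, Fin (n i)) → Prop,
      IsCompleteMultipartiteOrientation A Sigma.fst ∧ compGraph A = ⊤ := by
  let f : (Σ i : Fin 3, Fin (n i)) → Fin 7 := fun u =>
    ⟨if u.1.val = 2 then 6 else 3*u.1.val + min u.2.val 2, by
      have := u.1.isLt; split <;> omega⟩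
  let s : Fin 7 → Σ i : Fin 3, Fin (n i) := fun t =>
    ⟨⟨t.val/3, by have := t.isLt; omega⟩, ⟨t.val % 3, by
      rcases Nat.lt_or_ge t.val 6 with h|h
      · exact lt_of_lt_of_le (Nat.mod_lt _ (by omega))
          (hN ⟨t.val/3, by have := t.isLt; omega⟩ (by show t.val/3 ≤ 1; omega))
      · exact lt_of_lt_of_le (by show t.val % 3 < 1; have := t.isLt; omega) (hpos _)⟩⟩
  have hfs : ∀ t, f (s t) = t := by
    intro t
    apply Fin.ext
    show (if t.val/3 = 2 then 6 else 3*(t.val/3) + min (t.val % 3) 2) = t.val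
    have := t.isLt
    split <;> omega
  have hqv : ∀ x : Fin 7, (q331 x).val = x.val / 3 := by decide
  have hq : ∀ u, q331 (f u) = u.1 := by
    intro u
    apply Fin.ext
    rw [hqv]
    show (if u.1.val = 2 then 6 else 3*u.1.val + min u.2.val 2) / 3 = u.1.val
    have := u.1.isLt
    split <;> omega
  have hpart : ∀ u v : Σ i : Fin 3, Fin (n i), u.1 = v.1 ↔ q331 (f u) = q331 (f v) := by
    intro u v; rw [hq u, hq v]
  obtain ⟨ho, hc⟩ := blowup Sigma.fst q331 (fun i j => M331 i j = true)
    b331_ori b331_out b331_comp f s hfs hpart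
  exact ⟨_, ho, hc⟩

lemma pos2211 (n : Fin 4 → ℕ) (hpos : ∀ i, 0 < n i) (hN : ∀ j : Fin 4, j.val ≤ 1 → 2 ≤ n j) :
    ∃ A : (Σ i : Fin 4, Fin (n i)) → (Σ i : Fin 4, Fin (n i)) → Prop,
      IsCompleteMultipartiteOrientation A Sigma.fst ∧ compGraph A = ⊤ := by
  let f : (Σ i : Fin 4, Fin (n i)) → Fin 6 := fun u =>
    ⟨if u.1.val ≤ 1 then 2*u.1.val + min u.2.val 1 else u.1.val + 2, by
      have := u.1.isLt; split <;> omega⟩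
  let s : Fin 6 → Σ i : Fin 4, Fin (n i) := fun t =>
    ⟨⟨if t.val ≤ 3 then t.val/2 else t.val - 2, by have := t.isLt; split <;> omega⟩,
     ⟨if t.val ≤ 3 then t.val % 2 else 0, by
      rcases le_or_gt t.val 3 with h|h
      · simp only [if_pos h]
        exact lt_of_lt_of_le (Nat.mod_lt _ (by omega))
          (hN ⟨t.val/2, by omega⟩ (by show t.val/2 ≤ 1; omega))
      · simp only [if_neg (by omega : ¬ t.val ≤ 3)]
        exact hpos _⟩⟩
  have hfs : ∀ t, f (s t) = t := by
    intro t
    apply Fin.ext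
    show (if (if t.val ≤ 3 then t.val/2 else t.val - 2) ≤ 1 then
        2*(if t.val ≤ 3 then t.val/2 else t.val - 2) + min (if t.val ≤ 3 then t.val % 2 else 0) 1
      else (if t.val ≤ 3 then t.val/2 else t.val - 2) + 2) = t.val
    have := t.isLt
    split_ifs <;> omega
  have hqv : ∀ x : Fin 6, (q2211 x).val = if x.val ≤ 3 then x.val/2 else x.val - 2 := by decide
  have hq : ∀ u, q2211 (f u) = u.1 := by
    intro u
    apply Fin.ext
    rw [hqv]
    show (if (if u.1.val ≤ 1 then 2*u.1.val + min u.2.val 1 else u.1.val + 2) ≤ 3 then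
        (if u.1.val ≤ 1 then 2*u.1.val + min u.2.val 1 else u.1.val + 2)/2
      else (if u.1.val ≤ 1 then 2*u.1.val + min u.2.val 1 else u.1.val + 2) - 2) = u.1.val
    have := u.1.isLt
    split_ifs <;> omega
  have hpart : ∀ u v : Σ i : Fin 4, Fin (n i), u.1 = v.1 ↔ q2211 (f u) = q2211 (f v) := by
    intro u v; rw [hq u, hq v]
  obtain ⟨ho, hc⟩ := blowup Sigma.fst q2211 (fun i j => M2211 i j = true)
    b2211_ori b2211_out b2211_comp f s hfs hpart
  exact ⟨_, ho, hc⟩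

lemma pos3111 (n : Fin 4 → ℕ) (hpos : ∀ i, 0 < n i)
    (hN0 : ∀ (hh : (0:ℕ) < 4), 3 ≤ n ⟨0, hh⟩) :
    ∃ A : (Σ i : Fin 4, Fin (n i)) → (Σ i : Fin 4, Fin (n i)) → Prop,
      IsCompleteMultipartiteOrientation A Sigma.fst ∧ compGraph A = ⊤ := by
  let f : (Σ i : Fin 4, Fin (n i)) → Fin 6 := fun u =>
    ⟨if u.1.val = 0 then min u.2.val 2 else u.1.val + 2, by
      have := u.1.isLt; split <;> omega⟩
  let s : Fin 6 → Σ i : Fin 4, Fin (n i) := fun t =>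
    ⟨⟨if t.val ≤ 2 then 0 else t.val - 2, by have := t.isLt; split <;> omega⟩,
     ⟨if t.val ≤ 2 then t.val else 0, by
      rcases le_or_gt t.val 2 with h|h
      · simp only [if_pos h]
        exact lt_of_lt_of_le (by omega) (hN0 (by omega))
      · simp only [if_neg (by omega : ¬ t.val ≤ 2)]
        exact hpos _⟩⟩
  have hfs : ∀ t, f (s t) = t := by
    intro t
    apply Fin.ext
    show (if (if t.val ≤ 2 then 0 else t.val - 2) = 0 then
        min (if t.val ≤ 2 then t.val else 0) 2
      else (if t.val ≤ 2 then 0 else t.val - 2) + 2) = t.val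
    have := t.isLt
    split_ifs <;> omega
  have hqv : ∀ x : Fin 6, (q3111 x).val = if x.val ≤ 2 then 0 else x.val - 2 := by decide
  have hq : ∀ u, q3111 (f u) = u.1 := by
    intro u
    apply Fin.ext
    rw [hqv]
    show (if (if u.1.val = 0 then min u.2.val 2 else u.1.val + 2) ≤ 2 then 0
      else (if u.1.val = 0 then min u.2.val 2 else u.1.val + 2) - 2) = u.1.val
    have := u.1.isLt
    split_ifs <;> omega
  have hpart : ∀ u v : Σ i : Fin 4, Fin (n i), u.1 = v.1 ↔ q3111 (f u) = q3111 (f v) := by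
    intro u v; rw [hq u, hq v]
  obtain ⟨ho, hc⟩ := blowup Sigma.fst q3111 (fun i j => M3111 i j = true)
    b3111_ori b3111_out b3111_comp f s hfs hpart
  exact ⟨_, ho, hc⟩

lemma posCir (k : ℕ) (hk : 5 ≤ k) (n : Fin k → ℕ) (hpos : ∀ i, 0 < n i) :
    ∃ A : (Σ i : Fin k, Fin (n i)) → (Σ i : Fin k, Fin (n i)) → Prop,
      IsCompleteMultipartiteOrientation A Sigma.fst ∧ compGraph A = ⊤ := by
  obtain ⟨ho, hc⟩ := blowup Sigma.fst (id : Fin k → Fin k) (Cir k)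
    (cir_ori k hk) (cir_out k hk) (cir_comp k hk)
    Sigma.fst (fun i => (⟨i, ⟨0, hpos i⟩⟩ : Σ i : Fin k, Fin (n i))) (fun i => rfl) (fun u v => Iff.rfl)
  exact ⟨_, ho, hc⟩

section Neg3

variable {n : Fin 3 → ℕ}

/-- extensionality for vertices by values -/
lemma sext (u v : Σ i : Fin 3, Fin (n i)) (h1 : u.1.val = v.1.val)
    (h2 : u.2.val = v.2.val) : u = v := by
  obtain ⟨⟨iv, hi⟩, ⟨av, ha⟩⟩ := u
  obtain ⟨⟨jv, hj⟩, ⟨bv, hb⟩⟩ := v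
  simp only at h1 h2
  subst h1; subst h2
  rfl

lemma pne {u v : Σ i : Fin 3, Fin (n i)} (h : u.1.val ≠ v.1.val) : u ≠ v :=
  fun hh => h (congrArg (fun x => (Sigma.fst x).val) hh)

lemma neg311 (n : Fin 3 → ℕ) (hpos : ∀ i, 0 < n i)
    (h1 : n ⟨1, by omega⟩ = 1) (h2 : n ⟨2, by omega⟩ = 1)
    (A : (Σ i : Fin 3, Fin (n i)) → (Σ i : Fin 3, Fin (n i)) → Prop)
    (hA : IsCompleteMultipartiteOrientation A Sigma.fst)
    (hC : ∀ u v, u ≠ v → CompAdj A u v) : False := by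
  have h1' : ∀ (hh : (1:ℕ) < 3), n ⟨1, hh⟩ = 1 := fun hh => h1
  have h2' : ∀ (hh : (2:ℕ) < 3), n ⟨2, hh⟩ = 1 := fun hh => h2
  obtain ⟨y, hy1, hy2⟩ : ∃ u : Σ i : Fin 3, Fin (n i), u.1.val = 1 ∧ u.2.val = 0 :=
    ⟨⟨⟨1, by omega⟩, ⟨0, hpos _⟩⟩, rfl, rfl⟩
  obtain ⟨z, hz1, hz2⟩ : ∃ u : Σ i : Fin 3, Fin (n i), u.1.val = 2 ∧ u.2.val = 0 :=
    ⟨⟨⟨2, by omega⟩, ⟨0, hpos _⟩⟩, rfl, rfl⟩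
  have cov : ∀ u : Σ i : Fin 3, Fin (n i), u.1.val = 0 ∨ u = y ∨ u = z := by
    rintro ⟨⟨iv, hi⟩, ⟨av, ha⟩⟩
    interval_cases iv
    · exact Or.inl rfl
    · have ha2 : av < 1 := lt_of_lt_of_le ha (le_of_eq (h1' hi))
      exact Or.inr (Or.inl (sext _ _ (by simp; omega) (by simp; omega)))
    · have ha2 : av < 1 := lt_of_lt_of_le ha (le_of_eq (h2' hi))
      exact Or.inr (Or.inr (sext _ _ (by simp; omega) (by simp; omega)))
  have hyz : y ≠ z := pne (by omega)
  obtain ⟨-, w, hwy, hwz, H⟩ := hC y z hyz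
  have hw0 : w.1.val = 0 := by
    rcases cov w with h | h | h
    · exact h
    · exact absurd h hwy
    · exact absurd h hwz
  have key : A y w ∧ A z w := by
    rcases H with ⟨h4, h5 | ⟨c, hc1, hc2, hc3⟩⟩ | ⟨h4, h5 | ⟨c, hc1, hc2, hc3⟩⟩
    · exact ⟨h4, h5⟩
    · exfalso
      rcases cov c with hc | hc | hc
      · exact hA.1 c w (Fin.ext (by omega)) hc3
      · exact hc1 hc
      · rw [hc] at hc2; exact hA.1 z z rfl hc2
    · exact ⟨h5, h4⟩
    · exfalso
      rcases cov c with hc | hc | hc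
      · exact hA.1 c w (Fin.ext (by omega)) hc3
      · rw [hc] at hc2; exact hA.1 y y rfl hc2
      · exact hc1 hc
  obtain ⟨c, hcy, hwc⟩ := compadj_out (hC w y hwy)
  rcases cov c with hc | hc | hc
  · exact hA.1 w c (Fin.ext (by omega)) hwc
  · exact hcy hc
  · rw [hc] at hwc
    exact (hA.2 w z (fun h => by have := congrArg Fin.val h; omega)).2 ⟨hwc, key.2⟩

lemma neg321 (n : Fin 3 → ℕ) (hpos : ∀ i, 0 < n i)
    (h1 : n ⟨1, by omega⟩ = 2) (h2 : n ⟨2, by omega⟩ = 1)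
    (A : (Σ i : Fin 3, Fin (n i)) → (Σ i : Fin 3, Fin (n i)) → Prop)
    (hA : IsCompleteMultipartiteOrientation A Sigma.fst)
    (hC : ∀ u v, u ≠ v → CompAdj A u v) : False := by
  have h1' : ∀ (hh : (1:ℕ) < 3), n ⟨1, hh⟩ = 2 := fun hh => h1
  have h2' : ∀ (hh : (2:ℕ) < 3), n ⟨2, hh⟩ = 1 := fun hh => h2
  obtain ⟨y₁, hy11, hy12⟩ : ∃ u : Σ i : Fin 3, Fin (n i), u.1.val = 1 ∧ u.2.val = 0 :=
    ⟨⟨⟨1, by omega⟩, ⟨0, hpos _⟩⟩, rfl, rfl⟩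
  obtain ⟨y₂, hy21, hy22⟩ : ∃ u : Σ i : Fin 3, Fin (n i), u.1.val = 1 ∧ u.2.val = 1 :=
    ⟨⟨⟨1, by omega⟩, ⟨1, by rw [h1' (by omega)]; omega⟩⟩, rfl, rfl⟩
  obtain ⟨z, hz1, hz2⟩ : ∃ u : Σ i : Fin 3, Fin (n i), u.1.val = 2 ∧ u.2.val = 0 :=
    ⟨⟨⟨2, by omega⟩, ⟨0, hpos _⟩⟩, rfl, rfl⟩
  have cov : ∀ u : Σ i : Fin 3, Fin (n i), u.1.val = 0 ∨ u = y₁ ∨ u = y₂ ∨ u = z := by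
    rintro ⟨⟨iv, hi⟩, ⟨av, ha⟩⟩
    interval_cases iv
    · exact Or.inl rfl
    · have ha2 : av < 2 := lt_of_lt_of_le ha (le_of_eq (h1' hi))
      interval_cases av
      · exact Or.inr (Or.inl (sext _ _ (by simp; omega) (by simp; omega)))
      · exact Or.inr (Or.inr (Or.inl (sext _ _ (by simp; omega) (by simp; omega))))
    · have ha2 : av < 1 := lt_of_lt_of_le ha (le_of_eq (h2' hi))
      exact Or.inr (Or.inr (Or.inr (sext _ _ (by simp; omega) (by simp; omega))))
  -- common-prey-then-kill argument, parametrized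
  -- given vertices u0 v0 s0 t0 : the CompAdj pair (u0,v0), forbidden third vertex s0,
  -- with ¬A u0 s0, ¬A v0 s0, and {y₁,y₂,z} = {u0,v0,s0};
  -- obtain common prey w of u0 v0 in part 0, then kill pair (w, s0).
  have KILL : ∀ u0 v0 s0 : Σ i : Fin 3, Fin (n i),
      u0 ≠ v0 → u0 ≠ s0 → v0 ≠ s0 → u0.1.val ≠ 0 → v0.1.val ≠ 0 → s0.1.val ≠ 0 →
      (∀ c, c = y₁ ∨ c = y₂ ∨ c = z → c = u0 ∨ c = v0 ∨ c = s0) →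
      ¬ A u0 s0 → ¬ A v0 s0 → False := by
    intro u0 v0 s0 huv hus hvs hu0 hv0 hs0 hcov3 hAus hAvs
    obtain ⟨-, w, hw1, hw2, H⟩ := hC u0 v0 huv
    have cov' : ∀ c : Σ i : Fin 3, Fin (n i), c.1.val = 0 ∨ c = u0 ∨ c = v0 ∨ c = s0 := by
      intro c
      rcases cov c with h | h | h | h
      · exact Or.inl h
      · exact Or.inr (hcov3 c (Or.inl h))
      · exact Or.inr (hcov3 c (Or.inr (Or.inl h)))
      · exact Or.inr (hcov3 c (Or.inr (Or.inr h)))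
    have hw0 : w.1.val = 0 := by
      rcases cov' w with h | h | h | h
      · exact h
      · exact absurd h hw1
      · exact absurd h hw2
      · subst h
        rcases H with ⟨h4, -⟩ | ⟨h4, -⟩
        · exact absurd h4 hAus
        · exact absurd h4 hAvs
    have key : A u0 w ∧ A v0 w := by
      rcases H with ⟨h4, h5 | ⟨c, hc1, hc2, hc3⟩⟩ | ⟨h4, h5 | ⟨c, hc1, hc2, hc3⟩⟩
      · exact ⟨h4, h5⟩
      · exfalso
        rcases cov' c with hc | hc | hc | hc
        · exact hA.1 c w (Fin.ext (by omega)) hc3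
        · exact hc1 hc
        · rw [hc] at hc2; exact hA.1 v0 v0 rfl hc2
        · rw [hc] at hc2; exact hAvs hc2
      · exact ⟨h5, h4⟩
      · exfalso
        rcases cov' c with hc | hc | hc | hc
        · exact hA.1 c w (Fin.ext (by omega)) hc3
        · rw [hc] at hc2; exact hA.1 u0 u0 rfl hc2
        · exact hc1 hc
        · rw [hc] at hc2; exact hAus hc2
    obtain ⟨c, hcs, hwc⟩ := compadj_out (hC w s0 (pne (by omega)))
    rcases cov' c with hc | hc | hc | hc
    · exact hA.1 w c (Fin.ext (by omega)) hwc
    · rw [hc] at hwc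
      exact (hA.2 w u0 (fun h => by have := congrArg Fin.val h; omega)).2 ⟨hwc, key.1⟩
    · rw [hc] at hwc
      exact (hA.2 w v0 (fun h => by have := congrArg Fin.val h; omega)).2 ⟨hwc, key.2⟩
    · exact hcs hc
  have hy1y2 : y₁ ≠ y₂ := fun h => by
    have := congrArg (fun x => (Sigma.snd x).val) h
    omega
  have hpy2z : (Sigma.fst y₂) ≠ (Sigma.fst z) := fun h => by
    have := congrArg Fin.val h; omega
  have hpy1z : (Sigma.fst y₁) ≠ (Sigma.fst z) := fun h => by
    have := congrArg Fin.val h; omega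
  rcases (hA.2 y₂ z hpy2z).1 with hy2z | hzy2
  · exact KILL y₁ z y₂ (pne (by omega)) hy1y2 (Ne.symm (pne (by omega)))
      (by omega) (by omega) (by omega)
      (fun c h => by tauto)
      (hA.1 _ _ (Fin.ext (by omega)))
      (fun h => (hA.2 y₂ z hpy2z).2 ⟨hy2z, h⟩)
  · rcases (hA.2 y₁ z hpy1z).1 with hy1z | hzy1
    · exact KILL y₂ z y₁ (pne (by omega)) (Ne.symm hy1y2) (Ne.symm (pne (by omega)))
        (by omega) (by omega) (by omega)
        (fun c h => by tauto)
        (hA.1 _ _ (Fin.ext (by omega)))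
        (fun h => (hA.2 y₁ z hpy1z).2 ⟨hy1z, h⟩)
    · exact KILL y₁ y₂ z hy1y2 (pne (by omega)) (pne (by omega))
        (by omega) (by omega) (by omega)
        (fun c h => by tauto)
        (fun h => (hA.2 y₁ z hpy1z).2 ⟨h, hzy1⟩)
        (fun h => (hA.2 y₂ z hpy2z).2 ⟨h, hzy2⟩)

end Neg3

def P4 : Fin 4 → Fin 4 := ![0,1,2,3]
def IDX4 : Fin 4 → Fin 4 → Fin 6 := ![![0,0,1,2],![0,0,3,4],![0,0,0,5],![0,0,0,0]]
def PR4 : Fin 6 → Fin 4 × Fin 4 := ![(0,1),(0,2),(0,3),(1,2),(1,3),(2,3)]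
def D4 (g : Fin 6 → Bool) (i j : Fin 4) : Bool :=
  if P4 i = P4 j then false else if i < j then g (IDX4 i j) else !g (IDX4 j i)

lemma pr4_idx : ∀ i j : Fin 4, i < j → P4 i ≠ P4 j → PR4 (IDX4 i j) = (i, j) := by decide

set_option maxHeartbeats 4000000 in
lemma L1111 : ∀ g : Fin 6 → Bool,
    ∃ u v : Fin 4, u ≠ v ∧ ¬ CompAdj (fun i j => D4 g i j = true) u v := by decide

def P5 : Fin 5 → Fin 4 := ![0,0,1,2,3]
def IDX5 : Fin 5 → Fin 5 → Fin 9 :=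
  ![![0,0,0,1,2],![0,0,3,4,5],![0,0,0,6,7],![0,0,0,0,8],![0,0,0,0,0]]
def PR5 : Fin 9 → Fin 5 × Fin 5 := ![(0,2),(0,3),(0,4),(1,2),(1,3),(1,4),(2,3),(2,4),(3,4)]
def D5 (g : Fin 9 → Bool) (i j : Fin 5) : Bool :=
  if P5 i = P5 j then false else if i < j then g (IDX5 i j) else !g (IDX5 j i)

lemma pr5_idx : ∀ i j : Fin 5, i < j → P5 i ≠ P5 j → PR5 (IDX5 i j) = (i, j) := by decide

set_option maxHeartbeats 40000000 in
lemma L2111 : ∀ g : Fin 9 → Bool,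
    ∃ u v : Fin 5, u ≠ v ∧ ¬ CompAdj (fun i j => D5 g i j = true) u v := by decide

lemma sextk {k : ℕ} {n : Fin k → ℕ} (u v : Σ i : Fin k, Fin (n i)) (h1 : u.1.val = v.1.val)
    (h2 : u.2.val = v.2.val) : u = v := by
  obtain ⟨⟨iv, hi⟩, ⟨av, ha⟩⟩ := u
  obtain ⟨⟨jv, hj⟩, ⟨bv, hb⟩⟩ := v
  simp only at h1 h2
  subst h1; subst h2
  rfl

lemma compadj_equiv {α β : Type*} (e : α ≃ β) (A : α → α → Prop) {u v : α}
    (h : CompAdj A u v) : CompAdj (fun x y => A (e.symm x) (e.symm y)) (e u) (e v) := by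
  obtain ⟨hne, w, h1, h2, h3⟩ := h
  refine ⟨fun hh => hne (e.injective hh), e w, fun hh => h1 (e.injective hh),
    fun hh => h2 (e.injective hh), ?_⟩
  simp only [Equiv.symm_apply_apply]
  rcases h3 with ⟨h4, h5 | ⟨z, hz1, hz2, hz3⟩⟩ | ⟨h4, h5 | ⟨z, hz1, hz2, hz3⟩⟩
  · exact Or.inl ⟨h4, Or.inl h5⟩
  · refine Or.inl ⟨h4, Or.inr ⟨e z, fun hh => hz1 (e.injective hh), ?_, ?_⟩⟩ <;>
      simp only [Equiv.symm_apply_apply] <;> assumption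
  · exact Or.inr ⟨h4, Or.inl h5⟩
  · refine Or.inr ⟨h4, Or.inr ⟨e z, fun hh => hz1 (e.injective hh), ?_, ?_⟩⟩ <;>
      simp only [Equiv.symm_apply_apply] <;> assumption

/-- generic finite-kill bridge: if the part structure of `A'` matches `P`, and every
`P`-compatible tournament decoded through `D` fails to be complete, then `A'` cannot
be complete. Stated for `Fin N` with `PR/IDX` decoding data. -/
lemma bridge {N E I : ℕ} (P : Fin N → Fin I) (IDX : Fin N → Fin N → Fin E)
    (PR : Fin E → Fin N × Fin N)
    (hpr : ∀ i j : Fin N, i < j → P i ≠ P j → PR (IDX i j) = (i, j))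
    (DD : (Fin E → Bool) → Fin N → Fin N → Bool)
    (hDD : ∀ g i j, DD g i j =
      if P i = P j then false else if i < j then g (IDX i j) else !g (IDX j i))
    (hL : ∀ g : Fin E → Bool, ∃ u v : Fin N, u ≠ v ∧
      ¬ CompAdj (fun i j => DD g i j = true) u v)
    (A' : Fin N → Fin N → Prop)
    (hA1 : ∀ x y, P x = P y → ¬ A' x y)
    (hA2 : ∀ x y, P x ≠ P y → (A' x y ∨ A' y x) ∧ ¬ (A' x y ∧ A' y x))
    (hC' : ∀ x y, x ≠ y → CompAdj A' x y) : False := by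
  classical
  set g : Fin E → Bool := fun t => decide (A' (PR t).1 (PR t).2) with hg
  have hDg : ∀ x y, A' x y ↔ DD g x y = true := by
    intro x y
    by_cases hp : P x = P y
    · have hno : ¬ A' x y := hA1 x y hp
      rw [hDD, if_pos hp]
      simp [hno]
    · rcases lt_trichotomy x y with hlt | heq | hgt
      · have hpr' := hpr x y hlt hp
        rw [hDD, if_neg hp, if_pos hlt, hg]
        simp only [hpr']
        simp
      · exact absurd (congrArg P heq) hp
      · have hpr' := hpr y x hgt (Ne.symm hp)
        rw [hDD, if_neg hp, if_neg (asymm hgt), hg]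
        simp only [hpr']
        simp only [Bool.not_eq_true', decide_eq_false_iff_not]
        have h2 := hA2 x y hp
        constructor
        · intro h hyx; exact h2.2 ⟨h, hyx⟩
        · intro h; rcases h2.1 with h' | h'
          · exact h'
          · exact absurd h' h
  obtain ⟨u, v, huv, hnc⟩ := hL g
  exact hnc (compadj_congr hDg (hC' u v huv))

lemma neg1111 (n : Fin 4 → ℕ) (hpos : ∀ i, 0 < n i) (hone : ∀ i, n i = 1)
    (A : (Σ i : Fin 4, Fin (n i)) → (Σ i : Fin 4, Fin (n i)) → Prop)
    (hA : IsCompleteMultipartiteOrientation A Sigma.fst)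
    (hC : ∀ u v, u ≠ v → CompAdj A u v) : False := by
  let e : (Σ i : Fin 4, Fin (n i)) ≃ Fin 4 :=
    { toFun := Sigma.fst
      invFun := fun i => ⟨i, ⟨0, hpos i⟩⟩
      left_inv := by
        rintro ⟨i, a⟩
        exact sextk _ _ rfl (by
          have := lt_of_lt_of_le a.isLt (le_of_eq (hone i))
          simp; omega)
      right_inv := fun i => rfl }
  have hP : ∀ x : Fin 4, (e.symm x).1 = P4 x := by
    intro x; fin_cases x <;> rfl
  apply bridge P4 IDX4 PR4 pr4_idx D4 (fun g i j => rfl) L1111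
    (fun x y => A (e.symm x) (e.symm y))
  · intro x y hp
    exact hA.1 _ _ (by rw [hP, hP]; exact hp)
  · intro x y hp
    exact hA.2 _ _ (by rw [hP, hP]; exact hp)
  · intro x y hxy
    have h := hC (e.symm x) (e.symm y) (fun hh => hxy (by
      have := congrArg e hh
      simpa using this))
    have := compadj_equiv e A h
    simpa using this

lemma neg2111 (n : Fin 4 → ℕ) (hpos : ∀ i, 0 < n i)
    (h0 : n ⟨0, by omega⟩ = 2) (hone : ∀ i : Fin 4, i.val ≠ 0 → n i = 1)
    (A : (Σ i : Fin 4, Fin (n i)) → (Σ i : Fin 4, Fin (n i)) → Prop)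
    (hA : IsCompleteMultipartiteOrientation A Sigma.fst)
    (hC : ∀ u v, u ≠ v → CompAdj A u v) : False := by
  have h0' : ∀ (hh : (0:ℕ) < 4), n ⟨0, hh⟩ = 2 := fun hh => h0
  let e : (Σ i : Fin 4, Fin (n i)) ≃ Fin 5 :=
    { toFun := fun u => ⟨if u.1.val = 0 then min u.2.val 1 else u.1.val + 1, by
        have := u.1.isLt; split <;> omega⟩
      invFun := fun t => if h : t.val < 2 then
          ⟨⟨0, by omega⟩, ⟨t.val, lt_of_lt_of_le h (le_of_eq (h0' (by omega)).symm)⟩⟩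
        else ⟨⟨t.val - 1, by have := t.isLt; omega⟩, ⟨0, hpos _⟩⟩
      left_inv := by
        rintro ⟨⟨iv, hi⟩, ⟨av, ha⟩⟩
        interval_cases iv
        · have ha2 : av < 2 := lt_of_lt_of_le ha (le_of_eq (h0' hi))
          interval_cases av <;> rfl
        · have ha2 : av < 1 := lt_of_lt_of_le ha (le_of_eq (hone _ (by simp)))
          interval_cases av
          rfl
        · have ha2 : av < 1 := lt_of_lt_of_le ha (le_of_eq (hone _ (by simp)))
          interval_cases av
          rfl
        · have ha2 : av < 1 := lt_of_lt_of_le ha (le_of_eq (hone _ (by simp)))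
          interval_cases av
          rfl
      right_inv := by
        intro t
        fin_cases t <;> rfl }
  have hP : ∀ x : Fin 5, (e.symm x).1 = P5 x := by
    intro x; fin_cases x <;> rfl
  apply bridge P5 IDX5 PR5 pr5_idx D5 (fun g i j => rfl) L2111
    (fun x y => A (e.symm x) (e.symm y))
  · intro x y hp
    exact hA.1 _ _ (by rw [hP, hP]; exact hp)
  · intro x y hp
    exact hA.2 _ _ (by rw [hP, hP]; exact hp)
  · intro x y hxy
    have h := hC (e.symm x) (e.symm y) (fun hh => hxy (by
      have := congrArg e hh
      simpa using this))
    have := compadj_equiv e A h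
    simpa using this


/-- Let `k ≥ 3` and `n₁ ≥ n₂ ≥ ⋯ ≥ n_k ≥ 1`. There exists an orientation of
`K_{n₁,…,n_k}` whose `(1,2)`-step competition graph is complete iff (a) `k = 3` and either
(`n₂ ≥ 3` and `n₃ = 1`) or `n₃ ≥ 2`; or (b) `k = 4` and either (`n₁ ≥ 3` and `n₂ = 1`) or
`n₂ ≥ 2`; or (c) `k ≥ 5`. -/
theorem stmt11 (k : ℕ) (hk : 3 ≤ k) (n : Fin k → ℕ)
    (hpos : ∀ i, 0 < n i) (hanti : Antitone n) :
    (∃ A : (Σ i : Fin k, Fin (n i)) → (Σ i : Fin k, Fin (n i)) → Prop,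
      IsCompleteMultipartiteOrientation A Sigma.fst ∧ compGraph A = ⊤) ↔
    ((k = 3 ∧ ((3 ≤ n ⟨1, by omega⟩ ∧ n ⟨2, by omega⟩ = 1) ∨ 2 ≤ n ⟨2, by omega⟩)) ∨
     (k = 4 ∧ ((3 ≤ n ⟨0, by omega⟩ ∧ n ⟨1, by omega⟩ = 1) ∨ 2 ≤ n ⟨1, by omega⟩)) ∨
     5 ≤ k) := by
  constructor
  · rintro ⟨A, hA, hcomp⟩
    have hC := of_complete hcomp
    have hk345 : k = 3 ∨ k = 4 ∨ 5 ≤ k := by omega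
    rcases hk345 with rfl | rfl | h5
    · left
      refine ⟨rfl, ?_⟩
      by_contra hbad
      push_neg at hbad
      obtain ⟨hb1, hb2⟩ := hbad
      have h2p : 0 < n ⟨2, by omega⟩ := hpos _
      have h2v : n ⟨2, by omega⟩ = 1 := by omega
      have h1v : n ⟨1, by omega⟩ ≤ 2 := by
        by_contra hh
        exact hb1 (by omega) h2v
      have h1p : 0 < n ⟨1, by omega⟩ := hpos _
      have : n ⟨1, by omega⟩ = 1 ∨ n ⟨1, by omega⟩ = 2 := by omega
      rcases this with h | h
      · exact neg311 n hpos h h2v A hA hC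
      · exact neg321 n hpos h h2v A hA hC
    · right; left
      refine ⟨rfl, ?_⟩
      by_contra hbad
      push_neg at hbad
      obtain ⟨hb1, hb2⟩ := hbad
      have h1p : 0 < n ⟨1, by omega⟩ := hpos _
      have h1v : n ⟨1, by omega⟩ = 1 := by omega
      have h0v : n ⟨0, by omega⟩ ≤ 2 := by
        by_contra hh
        exact hb1 (by omega) h1v
      have hone : ∀ i : Fin 4, i.val ≠ 0 → n i = 1 := by
        intro i hi
        have hle : n i ≤ n ⟨1, by omega⟩ :=
          hanti (by rw [Fin.le_def]; show 1 ≤ i.val; omega)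
        have := hpos i
        omega
      have h0p : 0 < n ⟨0, by omega⟩ := hpos _
      have : n ⟨0, by omega⟩ = 1 ∨ n ⟨0, by omega⟩ = 2 := by omega
      rcases this with h | h
      · refine neg1111 n hpos ?_ A hA hC
        intro i
        by_cases hi0 : i.val = 0
        · have : i = ⟨0, by omega⟩ := Fin.ext hi0
          rw [this]; exact h
        · exact hone i hi0
      · exact neg2111 n hpos h hone A hA hC
    · exact Or.inr (Or.inr h5)
  · rintro (⟨hk3, hcase⟩ | ⟨hk4, hcase⟩ | h5)
    · subst hk3
      rcases hcase with ⟨h1, h2⟩ | h2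
      · refine pos331 n hpos ?_
        intro j hj
        exact le_trans h1 (hanti (by rw [Fin.le_def]; exact hj))
      · refine pos222 n hpos ?_
        intro j
        refine le_trans h2 (hanti ?_)
        rw [Fin.le_def]
        show j.val ≤ 2
        have := j.isLt
        omega
    · subst hk4
      rcases hcase with ⟨h1, h2⟩ | h2
      · exact pos3111 n hpos (fun hh => h1)
      · refine pos2211 n hpos ?_
        intro j hj
        exact le_trans h2 (hanti (by rw [Fin.le_def]; exact hj))
    · exact posCir k h5 n hpos
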